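/- For ξ ∈ ℕ^n with all coordinates positive and p ≥ |ξ|_1, if j appears as a coordinate of some element of I⁺(n,p) then for any i with 1 ≤ i < j, the total count of occurrences satisfies Λ_{I⁺(n,p)}(j) ≤ Λ_{I⁺(n,p)}(i), i.e., smaller positive values occur at least as often as larger ones among coordinates of vectors in I⁺(n,p). -/

import Mathlib

/-- The set I⁺(n,p) of vectors in ℕ^n with strictly positive coordinates and
coordinate sum at most p. -/
def Iplus (n p : ℕ) : Finset (Fin n → ℕ) :=
  ((Finset.range (p + 1)).biUnion (fun m => Finset.Nat.antidiagonalTuple n m)).filter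
    (fun ξ => ∀ i, 1 ≤ ξ i)

/-- Λ_{I⁺(n,p)}(j): total number of occurrences of j among coordinates of
vectors in I⁺(n,p). -/
def Lam (n p j : ℕ) : ℕ :=
  ∑ ξ ∈ Iplus n p, (Finset.univ.filter (fun i => ξ i = j)).card

lemma mem_Iplus {n p : ℕ} {ξ : Fin n → ℕ} :
    ξ ∈ Iplus n p ↔ (∑ l, ξ l) ≤ p ∧ ∀ i, 1 ≤ ξ i := by
  simp only [Iplus, Finset.mem_filter, Finset.mem_biUnion, Finset.mem_range,
    Finset.Nat.mem_antidiagonalTuple, Nat.lt_succ_iff]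
  constructor
  · rintro ⟨⟨m, hm, hs⟩, h2⟩; exact ⟨hs ▸ hm, h2⟩
  · rintro ⟨h1, h2⟩; exact ⟨⟨_, h1, rfl⟩, h2⟩

lemma Lam_eq (n p j : ℕ) :
    Lam n p j = ((Iplus n p).sigma
      (fun ξ => Finset.univ.filter (fun i => ξ i = j))).card := by
  rw [Finset.card_sigma, Lam]

/-- Monotonicity of occurrence counts: if j occurs as a coordinate of some element of
I⁺(n,p), then for any 1 ≤ i < j we have Λ(j) ≤ Λ(i). -/
theorem Lam_antitone (n p j : ℕ)
    (hj : ∃ ξ ∈ Iplus n p, ∃ l : Fin n, ξ l = j) :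
    ∀ i : ℕ, 1 ≤ i → i < j → Lam n p j ≤ Lam n p i := by
  intro i hi1 hij
  rw [Lam_eq, Lam_eq]
  apply Finset.card_le_card_of_injOn
    (fun x => ⟨Function.update x.1 x.2 i, x.2⟩)
  · rintro ⟨ξ, l⟩ hx
    simp only [Finset.mem_coe, Finset.mem_sigma, Finset.mem_filter, Finset.mem_univ, true_and] at hx ⊢
    obtain ⟨hξ, hl⟩ := hx
    rw [mem_Iplus] at hξ
    refine ⟨mem_Iplus.mpr ⟨?_, ?_⟩, Function.update_self _ _ _⟩
    · calc ∑ m, Function.update ξ l i m ≤ ∑ m, ξ m := by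
            apply Finset.sum_le_sum
            intro m _
            rcases eq_or_ne m l with rfl | hm
            · rw [Function.update_self, hl]; exact hij.le
            · rw [Function.update_of_ne hm]
          _ ≤ p := hξ.1
    · intro m
      rcases eq_or_ne m l with rfl | hm
      · rw [Function.update_self]; exact hi1
      · rw [Function.update_of_ne hm]; exact hξ.2 m
  · rintro ⟨ξ, l⟩ hx ⟨ξ', l'⟩ hx' heq
    simp only [Finset.mem_coe, Finset.mem_sigma, Finset.mem_filter, Finset.mem_univ, true_and] at hx hx'
    obtain ⟨heq1, heq2⟩ := Sigma.mk.inj_iff.mp heq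
    subst heq2
    have : ξ = ξ' := by
      have h1 : Function.update (Function.update ξ l i) l j = ξ := by
        rw [Function.update_idem]; rw [← hx.2]; exact Function.update_eq_self _ _
      have h2 : Function.update (Function.update ξ' l i) l j = ξ' := by
        rw [Function.update_idem]; rw [← hx'.2]; exact Function.update_eq_self _ _
      rw [← h1, ← h2, heq1]
    subst this
    rfl
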